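/- Let β₁, β₂ be nonzero real numbers with β₁β₂ < 0, γ := √(|β₁β₂|), and μ ∈ [0,1]. Then a real number λ satisfies det( [[|β₂|μ, −β₁|β₂| γ⁻¹(1−μ)], [|β₁|β₂ γ⁻¹(1−μ), −|β₁|μ]] − λ·diag(|β₂|, |β₁|) ) = 0 if and only if λ² = μ² + (1−μ)²; in particular every such λ satisfies 1/√2 ≤ |λ| ≤ 1. -/

import Mathlib

open Matrix

/-- The reduced `2×2` generalized eigenvalue computation for the real Schur
decomposition preconditioner: for `β₁β₂ < 0`, `γ = √|β₁β₂|` and `μ ∈ [0,1]`, a real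
`λ` makes the determinant vanish iff `λ² = μ² + (1−μ)²`; in particular every such `λ`
satisfies `1/√2 ≤ |λ| ≤ 1`. -/
theorem stmt_18 (β₁ β₂ : ℝ) (hβ₁ : β₁ ≠ 0) (hβ₂ : β₂ ≠ 0) (hsign : β₁ * β₂ < 0)
    (γ : ℝ) (hγ : γ = Real.sqrt |β₁ * β₂|) (μ : ℝ) (hμ : μ ∈ Set.Icc (0 : ℝ) 1) :
    (∀ lam : ℝ,
      ((!![|β₂| * μ, -(β₁ * |β₂|) * γ⁻¹ * (1 - μ);
           |β₁| * β₂ * γ⁻¹ * (1 - μ), -(|β₁| * μ)] : Matrix (Fin 2) (Fin 2) ℝ)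
        - lam • (!![|β₂|, 0; 0, |β₁|] : Matrix (Fin 2) (Fin 2) ℝ)).det = 0
      ↔ lam ^ 2 = μ ^ 2 + (1 - μ) ^ 2) ∧
    (∀ lam : ℝ, lam ^ 2 = μ ^ 2 + (1 - μ) ^ 2 →
      1 / Real.sqrt 2 ≤ |lam| ∧ |lam| ≤ 1) := by
  obtain ⟨hμ0, hμ1⟩ := hμ
  have hA : (0:ℝ) < |β₁ * β₂| := abs_pos.mpr (ne_of_lt hsign)
  have hγpos : 0 < γ := hγ ▸ Real.sqrt_pos.mpr hA
  have hγne : γ ≠ 0 := ne_of_gt hγpos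
  have hγ2 : γ ^ 2 = -(β₁ * β₂) := by
    rw [hγ, Real.sq_sqrt (abs_nonneg _), abs_of_neg hsign]
  have habs : |β₁| * |β₂| = -(β₁ * β₂) := by
    rw [← abs_mul, abs_of_neg hsign]
  have habs1 : β₁ * |β₂| * (|β₁| * β₂) = -(β₁ * β₂) * (β₁ * β₂) := by
    rcases abs_cases β₁ with ⟨h1, _⟩ | ⟨h1, _⟩ <;> rcases abs_cases β₂ with ⟨h2, _⟩ | ⟨h2, _⟩ <;>
      rw [h1, h2] <;> nlinarith [sq_nonneg (β₁*β₂)]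
  constructor
  · intro lam
    have hdet :
        ((!![|β₂| * μ, -(β₁ * |β₂|) * γ⁻¹ * (1 - μ);
             |β₁| * β₂ * γ⁻¹ * (1 - μ), -(|β₁| * μ)] : Matrix (Fin 2) (Fin 2) ℝ)
          - lam • (!![|β₂|, 0; 0, |β₁|] : Matrix (Fin 2) (Fin 2) ℝ)).det
        = -(β₁ * β₂) * (lam ^ 2 - (μ ^ 2 + (1 - μ) ^ 2)) := by
      rw [Matrix.det_fin_two]
      simp only [Matrix.sub_apply, Matrix.smul_apply, Matrix.cons_val', Matrix.cons_val_zero,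
        Matrix.cons_val_one, Matrix.head_cons, Matrix.head_fin_const, Matrix.empty_val',
        Matrix.cons_val_fin_one, smul_eq_mul, Matrix.of_apply]
      field_simp
      linear_combination ((lam ^ 2 - μ ^ 2) * γ ^ 2) * habs + (1 - μ) ^ 2 * habs1 +
        (-(β₁ * β₂) * (1 - μ) ^ 2) * hγ2
    have hne : -(β₁ * β₂) ≠ 0 := by linarith
    rw [hdet, mul_eq_zero, sub_eq_zero]
    constructor
    · rintro (h | h)
      · exact absurd h hne
      · exact h
    · intro h; right; exact h
  · intro lam h
    have h1 : (1:ℝ)/2 ≤ lam ^ 2 := by nlinarith [sq_nonneg (2 * μ - 1)]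
    have h2 : lam ^ 2 ≤ 1 := by nlinarith
    have habs' : Real.sqrt (lam ^ 2) = |lam| := Real.sqrt_sq_eq_abs lam
    constructor
    · rw [← habs', one_div, ← Real.sqrt_inv]
      exact Real.sqrt_le_sqrt (by linarith)
    · rw [← habs', show (1:ℝ) = Real.sqrt 1 by simp]
      exact Real.sqrt_le_sqrt h2
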